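/- Let 1 ≤ m ≤ n, x_m ∈ X_m, and (y₁,…,y_m,ξ) ∈ Y^m × X_{n−m} such that π_{m,n−m}(y₁,…,y_m,ξ) = φ_{n,m}(x_m). Then ξ ∈ φ_{n−m,0}(X₀). -/
import Mathlib


set_option linter.unusedSectionVars false
set_option linter.unusedVariables false

variable {Y : Type}

/-- Iterated embedding φ_{n,m} : X m → X n for m ≤ n. -/
def phiTo (X : ℕ → Type) (φs : ∀ n, X n → X (n + 1)) {m n : ℕ} (h : m ≤ n) (x : X m) : X n :=
  Nat.leRecOn h (fun {k} x => φs k x) x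

/-- Iterated projection π_{m,q} : Yᵐ × X q → X (q+m), the head of the word acting outermost. -/
def piFin (X : ℕ → Type) (πo : ∀ n, Y → X n → X (n + 1)) :
    ∀ (m q : ℕ), (Fin m → Y) → X q → X (q + m)
  | 0, _, _, x => x
  | m + 1, q, y, x => πo (q + m) (y 0) (piFin X πo m q (fun i => y i.succ) x)

/-- Iterated projection π_{m,0} : Yᵐ × X 0 → X m. -/
def piFin0 (X : ℕ → Type) (πo : ∀ n, Y → X n → X (n + 1)) :
    ∀ (m : ℕ), (Fin m → Y) → X 0 → X m
  | 0, _, x => x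
  | m + 1, y, x => πo m (y 0) (piFin0 X πo m (fun i => y i.succ) x)

/-- The set Γ_n(x_n) ⊂ Y^ℕ : all infinite addresses y such that for every p ≥ n the point
φ_{p,n}(x_n) lies in the cell C(y₁,…,y_p) = π_{p,0}({(y₁,…,y_p)} × X 0). -/
def Gamma (X : ℕ → Type) (φs : ∀ n, X n → X (n + 1)) (πo : ∀ n, Y → X n → X (n + 1))
    (n : ℕ) (xn : X n) : Set (ℕ → Y) :=
  { y | ∀ p, ∀ h : n ≤ p, ∃ x0 : X 0, phiTo X φs h xn = piFin0 X πo p (fun i : Fin p => y i.1) x0 }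

/-- The relation R on Y^ℕ: related iff equal or both in some Γ_n(x_n). -/
def simRel (X : ℕ → Type) (φs : ∀ n, X n → X (n + 1)) (πo : ∀ n, Y → X n → X (n + 1)) :
    (ℕ → Y) → (ℕ → Y) → Prop :=
  fun a b => a = b ∨ ∃ n, ∃ xn : X n, a ∈ Gamma X φs πo n xn ∧ b ∈ Gamma X φs πo n xn

variable {X : ℕ → Type}
  [TopologicalSpace Y] [CompactSpace Y] [T2Space Y]
  [∀ n, TopologicalSpace (X n)] [∀ n, CompactSpace (X n)] [∀ n, T2Space (X n)]

section Aux

variable {Y : Type} {X : ℕ → Type}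

/-- πo commutes with iterated φ. -/
lemma piPhi_comm (φs : ∀ n, X n → X (n + 1)) (πo : ∀ n, Y → X n → X (n + 1))
    (hcomm : ∀ (n : ℕ) (y : Y) (x : X n), πo (n + 1) y (φs n x) = φs (n + 1) (πo n y x))
    {n p : ℕ} (h : n ≤ p) (y : Y) (x : X n) :
    πo p y (phiTo X φs h x) = phiTo X φs (Nat.succ_le_succ h) (πo n y x) := by
  induction h with
  | refl =>
    unfold phiTo
    rw [Nat.leRecOn_self, Nat.leRecOn_self]
  | @step p h ih =>
    unfold phiTo at *
    rw [Nat.leRecOn_succ h, hcomm, ih, Nat.leRecOn_succ (Nat.succ_le_succ h)]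

/-- phiTo from 0 through 1. -/
lemma phiTo_zero_succ (φs : ∀ n, X n → X (n + 1)) {s : ℕ} (x0 : X 0) :
    phiTo X φs (Nat.zero_le (s + 1)) x0
      = phiTo X φs (Nat.succ_le_succ (Nat.zero_le s)) (φs 0 x0) := by
  unfold phiTo
  rw [Nat.leRecOn_succ_left (h1 := Nat.zero_le (s + 1))]

/-- Key lemma: if an iterated projection lands on a fully embedded point, the base point is
embedded from X 0. -/
lemma key_lemma (φs : ∀ n, X n → X (n + 1)) (πo : ∀ n, Y → X n → X (n + 1))
    (hπs : ∀ n, Function.Surjective fun p : Y × X n => πo n p.1 p.2)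
    (hcomm : ∀ (n : ℕ) (y : Y) (x : X n), πo (n + 1) y (φs n x) = φs (n + 1) (πo n y x))
    (hquot : ∀ (n : ℕ) (y y' : Y) (ξ ξ' : X n), πo n y ξ = πo n y' ξ' → (y, ξ) ≠ (y', ξ') →
      ∃ x0 x0' : X 0, ξ = phiTo X φs (Nat.zero_le n) x0 ∧ ξ' = phiTo X φs (Nat.zero_le n) x0' ∧
        πo 0 y x0 = πo 0 y' x0') :
    ∀ (m q : ℕ) (y : Fin m → Y) (ξ : X q) (x0 : X 0),
      piFin X πo m q y ξ = phiTo X φs (Nat.zero_le (q + m)) x0 →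
      ∃ z : X 0, ξ = phiTo X φs (Nat.zero_le q) z := by
  intro m
  induction m with
  | zero => intro q y ξ x0 h; exact ⟨x0, h⟩
  | succ m ih =>
    intro q y ξ x0 h
    obtain ⟨⟨y', x0'⟩, hy'⟩ := hπs 0 (φs 0 x0)
    replace hy' : πo 0 y' x0' = φs 0 x0 := hy'
    simp only [piFin] at h
    rw [phiTo_zero_succ φs x0, ← hy'] at h
    rw [← piPhi_comm φs πo hcomm (Nat.zero_le (q + m)) y' x0'] at h
    by_cases hc : (y 0, piFin X πo m q (fun i => y i.succ) ξ)
        = (y', phiTo X φs (Nat.zero_le (q + m)) x0')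
    · exact ih q _ ξ x0' (congrArg Prod.snd hc)
    · obtain ⟨a, a', ha, _, _⟩ := hquot (q + m) _ _ _ _ h hc
      exact ih q _ ξ a ha

end Aux

theorem statement_5
    (φs : ∀ n, X n → X (n + 1)) (πo : ∀ n, Y → X n → X (n + 1))
    (hφc : ∀ n, Continuous (φs n)) (hφi : ∀ n, Function.Injective (φs n))
    (hπc : ∀ n, Continuous fun p : Y × X n => πo n p.1 p.2)
    (hπs : ∀ n, Function.Surjective fun p : Y × X n => πo n p.1 p.2)
    (hcomm : ∀ (n : ℕ) (y : Y) (x : X n), πo (n + 1) y (φs n x) = φs (n + 1) (πo n y x))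
    (hquot : ∀ (n : ℕ) (y y' : Y) (ξ ξ' : X n), πo n y ξ = πo n y' ξ' → (y, ξ) ≠ (y', ξ') →
      ∃ x0 x0' : X 0, ξ = phiTo X φs (Nat.zero_le n) x0 ∧ ξ' = phiTo X φs (Nat.zero_le n) x0' ∧
        πo 0 y x0 = πo 0 y' x0')
    (m q : ℕ) (hm : 1 ≤ m) (xm : X m) (y : Fin m → Y) (ξ : X q)
    (h : piFin X πo m q y ξ = phiTo X φs (show m ≤ q + m by omega) xm) :
    ∃ z : X 0, ξ = phiTo X φs (Nat.zero_le q) z := by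
  obtain ⟨k, rfl⟩ : ∃ k, m = k + 1 := ⟨m - 1, by omega⟩
  clear hm
  induction k generalizing q with
  | zero =>
    obtain ⟨⟨y', x'⟩, hy'⟩ := hπs 0 xm
    replace hy' : πo 0 y' x' = xm := hy'
    have hcm := piPhi_comm φs πo hcomm (Nat.le_add_left 0 q) y' x'
    have hh : piFin X πo (0 + 1) q y ξ
        = phiTo X φs (Nat.succ_le_succ (Nat.le_add_left 0 q)) (πo 0 y' x') := by
      rw [hy']; exact h
    have h2 : πo (q + 0) (y 0) ξ
        = πo (q + 0) y' (phiTo X φs (Nat.le_add_left 0 q) x') := hh.trans hcm.symm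
    by_cases hc : ((y 0 : Y), ξ) = (y', phiTo X φs (Nat.le_add_left 0 q) x')
    · exact ⟨x', congrArg Prod.snd hc⟩
    · obtain ⟨a, a', ha, _, _⟩ := hquot (q + 0) _ _ _ _ h2 hc
      exact ⟨a, ha⟩
  | succ k ihk =>
    obtain ⟨⟨y', x'⟩, hy'⟩ := hπs (k + 1) xm
    replace hy' : πo (k + 1) y' x' = xm := hy'
    have hcm := piPhi_comm φs πo hcomm (Nat.le_add_left (k + 1) q) y' x'
    have hh : piFin X πo (k + 1 + 1) q y ξ
        = phiTo X φs (Nat.succ_le_succ (Nat.le_add_left (k + 1) q)) (πo (k + 1) y' x') := by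
      rw [hy']; exact h
    have h2 : πo (q + (k + 1)) (y 0) (piFin X πo (k + 1) q (fun i => y i.succ) ξ)
        = πo (q + (k + 1)) y' (phiTo X φs (Nat.le_add_left (k + 1) q) x') := hh.trans hcm.symm
    by_cases hc : ((y 0 : Y), piFin X πo (k + 1) q (fun i => y i.succ) ξ)
        = (y', phiTo X φs (Nat.le_add_left (k + 1) q) x')
    · exact ihk q ξ x' (fun i => y i.succ) (congrArg Prod.snd hc)
    · obtain ⟨a, a', ha, _, _⟩ := hquot (q + (k + 1)) _ _ _ _ h2 hc
      exact key_lemma φs πo hπs hcomm hquot (k + 1) q _ ξ a ha
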